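/- For every integer k ≥ 2, the extension complexity of the 2-dimensional cyclic polytope satisfies xc(P^2_{2k}) ≤ xc(P^2_k) + 2 and xc(P^2_{2k−1}) ≤ xc(P^2_k) + 2. -/

import Mathlib

noncomputable def cyclic (d : ℕ) (t₁ t₂ : ℤ) : Set (Fin d → ℝ) :=
  convexHull ℝ { x | ∃ i : ℤ, t₁ ≤ i ∧ i ≤ t₂ ∧ x = fun u : Fin d => (i : ℝ) ^ ((u : ℕ) + 1) }

/-- The extension complexity of `P ⊆ ℝ^d`: the least number `m` of inequalities in an
extended formulation, i.e. a system `A y ≤ b`, `C y = e` in some `ℝ^N` together with an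
affine projection whose image is `P`. -/
noncomputable def xc {d : ℕ} (P : Set (Fin d → ℝ)) : ℕ :=
  sInf { m : ℕ | ∃ (N k : ℕ) (A : Matrix (Fin m) (Fin N) ℝ) (b : Fin m → ℝ)
    (C : Matrix (Fin k) (Fin N) ℝ) (e : Fin k → ℝ)
    (π : (Fin N → ℝ) →ᵃ[ℝ] (Fin d → ℝ)),
    P = π '' { y | A.mulVec y ≤ b ∧ C.mulVec y = e } }

open Set

abbrev E2 := Fin 2 → ℝ
def pt (i : ℤ) : E2 := fun u => (i:ℝ) ^ ((u:ℕ)+1)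
def V (t₁ t₂ : ℤ) : Set E2 := {x | ∃ i : ℤ, t₁ ≤ i ∧ i ≤ t₂ ∧ x = pt i}
lemma pt_zero (i : ℤ) : pt i 0 = (i:ℝ) := by simp [pt]
lemma pt_one (i : ℤ) : pt i 1 = (i:ℝ)^2 := by simp [pt]
lemma cyclic_eq (t₁ t₂ : ℤ) : cyclic 2 t₁ t₂ = convexHull ℝ (V t₁ t₂) := rfl

def xcSet {d : ℕ} (P : Set (Fin d → ℝ)) : Set ℕ :=
  { m : ℕ | ∃ (N k : ℕ) (A : Matrix (Fin m) (Fin N) ℝ) (b : Fin m → ℝ)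
    (C : Matrix (Fin k) (Fin N) ℝ) (e : Fin k → ℝ)
    (π : (Fin N → ℝ) →ᵃ[ℝ] (Fin d → ℝ)),
    P = π '' { y | A.mulVec y ≤ b ∧ C.mulVec y = e } }

lemma xc_eq_sInf {d : ℕ} (P : Set (Fin d → ℝ)) : xc P = sInf (xcSet P) := rfl

lemma pt_ext (x : E2) (i : ℤ) (h0 : x 0 = (i:ℝ)) (h1 : x 1 = (i:ℝ)^2) : x = pt i := by
  funext u
  fin_cases u
  · simpa [pt] using h0
  · simpa [pt] using h1

lemma e2_ext (x y : E2) (h0 : x 0 = y 0) (h1 : x 1 = y 1) : x = y := by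
  funext u; fin_cases u <;> assumption

lemma pt_mem_V {a b i : ℤ} (h1 : a ≤ i) (h2 : i ≤ b) : pt i ∈ V a b := ⟨i, h1, h2, rfl⟩

lemma V_union (a b c d : ℤ) (hcb : c ≤ b + 1) (hbd : b ≤ d) (hac : a ≤ c) :
    V a b ∪ V c d = V a d := by
  ext x
  constructor
  · rintro (⟨i, h1, h2, rfl⟩ | ⟨i, h1, h2, rfl⟩)
    · exact ⟨i, h1, h2.trans hbd, rfl⟩
    · exact ⟨i, hac.trans h1, h2, rfl⟩
  · rintro ⟨i, h1, h2, rfl⟩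
    by_cases hib : i ≤ b
    · exact Or.inl ⟨i, h1, hib, rfl⟩
    · exact Or.inr ⟨i, by omega, h2, rfl⟩

noncomputable def affMap2 (a b c d e f : ℝ) : E2 →ᵃ[ℝ] E2 :=
  AffineMap.mk' (fun x => ![a * x 0 + b * x 1 + c, d * x 0 + e * x 1 + f])
    (Matrix.mulVecLin !![a, b; d, e]) 0 (by
      intro p
      funext u
      fin_cases u <;>
        simp [Matrix.mulVecLin, Matrix.mulVec, Fin.sum_univ_two, dotProduct])

@[simp] lemma affMap2_apply (a b c d e f : ℝ) (x : E2) :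
    affMap2 a b c d e f x = ![a * x 0 + b * x 1 + c, d * x 0 + e * x 1 + f] := by
  simp [affMap2]

lemma tau_image (s a b : ℤ) :
    (affMap2 1 0 (s:ℝ) (2*(s:ℝ)) 1 ((s:ℝ)^2)) '' V a b = V (a+s) (b+s) := by
  have hpt : ∀ i : ℤ, (affMap2 1 0 (s:ℝ) (2*(s:ℝ)) 1 ((s:ℝ)^2)) (pt i) = pt (i+s) := by
    intro i
    apply pt_ext
    · simp [pt_zero, pt_one]
      try push_cast
      try ring_nf
    · simp [pt_zero, pt_one]
      try push_cast
      try ring_nf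
  ext x
  constructor
  · rintro ⟨-, ⟨i, h1, h2, rfl⟩, rfl⟩
    exact ⟨i + s, by omega, by omega, hpt i⟩
  · rintro ⟨j, h1, h2, rfl⟩
    exact ⟨pt (j - s), ⟨j - s, by omega, by omega, rfl⟩, by rw [hpt]; ring_nf⟩

lemma rho_image (w a b : ℤ) :
    (affMap2 (-1) 0 (2*((w:ℝ)/2)) (-(2*(w:ℝ))) 1 ((2*(w:ℝ))*((w:ℝ)/2))) '' V a b
      = V (w-b) (w-a) := by
  have hpt : ∀ i : ℤ,
      (affMap2 (-1) 0 (2*((w:ℝ)/2)) (-(2*(w:ℝ))) 1 ((2*(w:ℝ))*((w:ℝ)/2))) (pt i)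
        = pt (w - i) := by
    intro i
    apply pt_ext
    · simp [pt_zero, pt_one]
      try push_cast
      try ring_nf
    · simp [pt_zero, pt_one]
      try push_cast
      try ring_nf
  ext x
  constructor
  · rintro ⟨-, ⟨i, h1, h2, rfl⟩, rfl⟩
    exact ⟨w - i, by omega, by omega, hpt i⟩
  · rintro ⟨j, h1, h2, rfl⟩
    exact ⟨pt (w - j), ⟨w - j, by omega, by omega, rfl⟩, by rw [hpt]; ring_nf⟩

lemma reflect_hull (β γ : ℝ) (S : Set E2) (hS : ∀ x ∈ S, β ≤ x 0) :
    convexHull ℝ (S ∪ (affMap2 (-1) 0 (2*β) (-γ) 1 (γ*β)) '' S) =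
      {x | ∃ y ∈ convexHull ℝ S, x 1 - (γ/2) * x 0 = y 1 - (γ/2) * y 0 ∧
        x 0 ≤ y 0 ∧ 2*β - x 0 ≤ y 0} := by
  set ρ := affMap2 (-1) 0 (2*β) (-γ) 1 (γ*β) with hρ
  have hρ0 : ∀ x : E2, ρ x 0 = 2*β - x 0 := by intro x; simp [hρ]; ring
  have hρ1 : ∀ x : E2, ρ x 1 = x 1 - γ * (x 0 - β) := by intro x; simp [hρ]; ring
  have hP : ∀ y ∈ convexHull ℝ S, β ≤ y 0 := by
    intro y hy
    have hconv : Convex ℝ {x : E2 | β ≤ x 0} :=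
      convex_halfSpace_ge ⟨fun a b => rfl, fun c x => rfl⟩ β
    exact convexHull_min hS hconv hy
  apply le_antisymm
  · -- LHS ⊆ RHS
    apply convexHull_min
    · rintro x (hx | ⟨s, hs, rfl⟩)
      · exact ⟨x, subset_convexHull ℝ S hx, rfl, le_refl _, by have := hS x hx; linarith⟩
      · refine ⟨s, subset_convexHull ℝ S hs, ?_, ?_, ?_⟩
        · rw [hρ0, hρ1]; ring
        · rw [hρ0]; have := hS s hs; linarith
        · rw [hρ0]; linarith
    · -- RHS convex
      rintro x₁ ⟨y₁, hy₁, he₁, ha₁, hb₁⟩ x₂ ⟨y₂, hy₂, he₂, ha₂, hb₂⟩ a b ha hb hab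
      refine ⟨a • y₁ + b • y₂, (convex_convexHull ℝ S) hy₁ hy₂ ha hb hab, ?_, ?_, ?_⟩
      · simp only [Pi.add_apply, Pi.smul_apply, smul_eq_mul]
        linear_combination a * he₁ + b * he₂
      · simp only [Pi.add_apply, Pi.smul_apply, smul_eq_mul]
        nlinarith [mul_le_mul_of_nonneg_left ha₁ ha, mul_le_mul_of_nonneg_left ha₂ hb, hab]
      · simp only [Pi.add_apply, Pi.smul_apply, smul_eq_mul]
        have hβ : a * (2*β) + b * (2*β) = 2*β := by linear_combination (2*β) * hab
        nlinarith [mul_le_mul_of_nonneg_left hb₁ ha, mul_le_mul_of_nonneg_left hb₂ hb, hβ]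
  · -- RHS ⊆ LHS
    rintro x ⟨y, hy, he, h1, h2⟩
    have hyβ : β ≤ y 0 := hP y hy
    have hyL : y ∈ convexHull ℝ (S ∪ ρ '' S) :=
      convexHull_mono subset_union_left hy
    have hρyL : ρ y ∈ convexHull ℝ (S ∪ ρ '' S) := by
      have : ρ y ∈ ρ '' convexHull ℝ S := mem_image_of_mem _ hy
      rw [AffineMap.image_convexHull] at this
      exact convexHull_mono subset_union_right this
    by_cases hcy : y 0 = β
    · -- degenerate: x = y
      have hx0 : x 0 = y 0 := by linarith
      have hx1 : x 1 = y 1 := by linear_combination he + (γ/2) * hx0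
      have : x = y := e2_ext _ _ hx0 hx1
      rw [this]; exact hyL
    · have hcy' : (0:ℝ) < y 0 - β := lt_of_le_of_ne (by linarith) (fun h => hcy (by linarith))
      have hne1 : y 0 - β ≠ 0 := ne_of_gt hcy'
      have hne2 : 2 * (y 0 - β) ≠ 0 := by positivity
      set a := ((y 0 - β) + (x 0 - β)) / (2 * (y 0 - β)) with hadef
      set b := ((y 0 - β) - (x 0 - β)) / (2 * (y 0 - β)) with hbdef
      have ha : 0 ≤ a := by rw [hadef]; apply div_nonneg _ (by positivity); linarith
      have hb : 0 ≤ b := by rw [hbdef]; apply div_nonneg _ (by positivity); linarith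
      have hab : a + b = 1 := by rw [hadef, hbdef]; field_simp; ring
      have hxcomb : x = a • y + b • ρ y := by
        refine e2_ext _ _ ?_ ?_
        · simp only [Pi.add_apply, Pi.smul_apply, smul_eq_mul, hρ0 y, hadef, hbdef]
          field_simp
          ring
        · simp only [Pi.add_apply, Pi.smul_apply, smul_eq_mul, hρ1 y, hadef, hbdef]
          have hx1 : x 1 = y 1 - (γ/2) * (y 0 - x 0) := by linarith [he]
          rw [hx1]
          field_simp
          ring
      rw [hxcomb]
      exact (convex_convexHull ℝ _) hyL hρyL ha hb hab

lemma forall_split (a b : ℕ) (p : Fin (a+b) → Prop) :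
    (∀ i, p i) ↔ ((∀ i, p (Fin.castAdd b i)) ∧ (∀ i, p (Fin.natAdd a i))) :=
  ⟨fun h => ⟨fun _ => h _, fun _ => h _⟩, fun ⟨h1, h2⟩ i => Fin.addCases h1 h2 i⟩

lemma dot_addCases (N : ℕ) (r₀ : Fin N → ℝ) (r₁ : Fin 2 → ℝ) (z : Fin (N+2) → ℝ) :
    ∑ j, (Fin.addCases (motive := fun _ => ℝ) r₀ r₁ j) * z j
      = (∑ j₀, r₀ j₀ * z (Fin.castAdd 2 j₀))
        + (r₁ 0 * z (Fin.natAdd N 0) + r₁ 1 * z (Fin.natAdd N 1)) := by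
  rw [Fin.sum_univ_add]
  simp [Fin.sum_univ_two]

lemma dot_addCases1 (N : ℕ) (r₀ : Fin N → ℝ) (r₁ : Fin 1 → ℝ) (z : Fin (N+1) → ℝ) :
    ∑ j, (Fin.addCases (motive := fun _ => ℝ) r₀ r₁ j) * z j
      = (∑ j₀, r₀ j₀ * z (Fin.castAdd 1 j₀)) + r₁ 0 * z (Fin.natAdd N 0) := by
  rw [Fin.sum_univ_add]
  simp

lemma step (k n : ℤ) (hk : 1 ≤ k) (hn1 : 2*k-1 ≤ n) (hn2 : n ≤ 2*k) (m : ℕ)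
    (hm : m ∈ xcSet (cyclic 2 1 k)) : m + 2 ∈ xcSet (cyclic 2 1 n) := by
  obtain ⟨N, K, A, b, C, e, π, hπ⟩ := hm
  set s : ℤ := n - k with hs
  set β : ℝ := ((n + 1 : ℤ) : ℝ)/2 with hβ
  set γ : ℝ := 2*((n + 1 : ℤ) : ℝ) with hγ
  set τ : E2 →ᵃ[ℝ] E2 := affMap2 1 0 (s:ℝ) (2*(s:ℝ)) 1 ((s:ℝ)^2) with hτ
  set ρ : E2 →ᵃ[ℝ] E2 := affMap2 (-1) 0 (2*β) (-γ) 1 (γ*β) with hρ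
  set φ : (Fin N → ℝ) →ᵃ[ℝ] E2 := τ.comp π with hφ
  set Mat : Matrix (Fin 2) (Fin N) ℝ := LinearMap.toMatrix' φ.linear with hMat
  set Sy : Set (Fin N → ℝ) := { y | A.mulVec y ≤ b ∧ C.mulVec y = e } with hSy
  have hMat_mul : ∀ y, Mat.mulVec y = φ.linear y := by
    intro y; rw [hMat, ← Matrix.toLin'_apply, Matrix.toLin'_toMatrix']
  have hφ_eq : ∀ y, φ y = φ.linear y + φ 0 := by
    intro y
    conv_lhs => rw [show y = y +ᵥ (0 : Fin N → ℝ) by simp, AffineMap.map_vadd]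
    rfl
  have hw : (((n + 1 : ℤ)) : ℝ) = (n:ℝ) + 1 := by push_cast; ring
  -- Step A : the convex hull identity coming from the reflection
  have hhull : cyclic 2 1 n =
      {x : E2 | ∃ y ∈ Sy,
        x 1 - ((n:ℝ)+1) * x 0 = (φ y) 1 - ((n:ℝ)+1) * (φ y) 0 ∧
        x 0 ≤ (φ y) 0 ∧ ((n:ℝ)+1) - x 0 ≤ (φ y) 0} := by
    have himg : ρ '' V (s+1) n = V 1 k := by
      have e1 : n + 1 - n = (1:ℤ) := by omega
      have e2 : n + 1 - (s+1) = k := by rw [hs]; omega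
      rw [hρ, hβ, hγ, rho_image (n+1) (s+1) n, e1, e2]
    have hSmem : ∀ x ∈ V (s+1) n, β ≤ x 0 := by
      rintro x ⟨i, h1, h2, rfl⟩
      rw [pt_zero, hβ]
      have : (n + 1 : ℤ) ≤ 2 * i := by omega
      have : ((n + 1 : ℤ) : ℝ) ≤ 2 * (i : ℝ) := by exact_mod_cast this
      linarith
    have hU : cyclic 2 1 n = convexHull ℝ (V (s+1) n ∪ ρ '' V (s+1) n) := by
      rw [cyclic_eq, himg, union_comm]
      rw [V_union 1 k (s+1) n (by omega) (by omega) (by omega)]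
    have hhullS : convexHull ℝ (V (s+1) n) = φ '' Sy := by
      have h1 : V (s+1) n = τ '' V 1 k := by
        have e3 : (1:ℤ) + s = s + 1 := by omega
        have e4 : k + s = n := by rw [hs]; omega
        rw [hτ, tau_image s 1 k, e3, e4]
      rw [h1, ← AffineMap.image_convexHull, ← cyclic_eq, hπ, ← Set.image_comp,
        ← AffineMap.coe_comp, ← hφ]
    rw [hU, hρ, reflect_hull β γ _ hSmem, hhullS]
    ext x
    simp only [mem_setOf_eq, mem_image]
    constructor
    · rintro ⟨-, ⟨y, hy, rfl⟩, hc1, hc2, hc3⟩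
      refine ⟨y, hy, ?_, hc2, ?_⟩
      · rw [hγ, hw] at hc1; linarith [hc1]
      · rw [hβ, hw] at hc3; linarith [hc3]
    · rintro ⟨y, hy, hc1, hc2, hc3⟩
      refine ⟨φ y, ⟨y, hy, rfl⟩, ?_, hc2, ?_⟩
      · rw [hγ, hw]; linarith [hc1]
      · rw [hβ, hw]; linarith [hc3]
  -- Step B : the extended formulation
  set A' : Matrix (Fin (m+2)) (Fin (N+2)) ℝ := Matrix.of (Fin.addCases
    (fun i₀ => Fin.addCases (fun j₀ => A i₀ j₀) (fun _ => 0))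
    (fun i₁ => Fin.addCases (fun j₀ => -(Mat 0 j₀)) (fun j₁ => !![(1:ℝ),0;-1,0] i₁ j₁)))
    with hA'
  set b' : Fin (m+2) → ℝ := Fin.addCases b ![φ 0 0, φ 0 0 - ((n:ℝ)+1)] with hb'
  set C' : Matrix (Fin (K+1)) (Fin (N+2)) ℝ := Matrix.of (Fin.addCases
    (fun i₀ => Fin.addCases (fun j₀ => C i₀ j₀) (fun _ => 0))
    (fun _ => Fin.addCases (fun j₀ => ((n:ℝ)+1) * Mat 0 j₀ - Mat 1 j₀)
      (fun j₁ => ![-((n:ℝ)+1), 1] j₁))) with hC'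
  set e' : Fin (K+1) → ℝ := Fin.addCases e (fun _ => φ 0 1 - ((n:ℝ)+1) * φ 0 0) with he'
  have hmem : ∀ z : Fin (N+2) → ℝ,
      (A'.mulVec z ≤ b' ∧ C'.mulVec z = e') ↔
      ((fun j => z (Fin.castAdd 2 j)) ∈ Sy ∧
        (z (Fin.natAdd N 1) - ((n:ℝ)+1) * z (Fin.natAdd N 0)
            = φ (fun j => z (Fin.castAdd 2 j)) 1
              - ((n:ℝ)+1) * φ (fun j => z (Fin.castAdd 2 j)) 0 ∧
          z (Fin.natAdd N 0) ≤ φ (fun j => z (Fin.castAdd 2 j)) 0 ∧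
          ((n:ℝ)+1) - z (Fin.natAdd N 0) ≤ φ (fun j => z (Fin.castAdd 2 j)) 0)) := by
    intro z
    set yz : Fin N → ℝ := fun j => z (Fin.castAdd 2 j) with hyzdef
    have hsum : ∀ u : Fin 2, ∑ j₀, Mat u j₀ * z (Fin.castAdd 2 j₀) = φ.linear yz u := by
      intro u
      have h := congrFun (hMat_mul yz) u
      simpa [Matrix.mulVec, dotProduct, hyzdef] using h
    have hφ0 := congrFun (hφ_eq yz) 0
    have hφ1 := congrFun (hφ_eq yz) 1
    simp only [Pi.add_apply] at hφ0 hφ1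
    have hrowA : ∀ i₀ : Fin m, A'.mulVec z (Fin.castAdd 2 i₀) = A.mulVec yz i₀ := by
      intro i₀
      simp only [Matrix.mulVec, dotProduct, hA', Matrix.of_apply, Fin.addCases_left]
      rw [dot_addCases]
      simp [hyzdef]
    have hrowC : ∀ i₀ : Fin K, C'.mulVec z (Fin.castAdd 1 i₀) = C.mulVec yz i₀ := by
      intro i₀
      simp only [Matrix.mulVec, dotProduct, hC', Matrix.of_apply, Fin.addCases_left]
      rw [dot_addCases]
      simp [hyzdef]
    have hA0 : A'.mulVec z (Fin.natAdd m 0) = z (Fin.natAdd N 0) - φ.linear yz 0 := by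
      simp only [Matrix.mulVec, dotProduct, hA', Matrix.of_apply, Fin.addCases_right]
      rw [dot_addCases]
      simp only [neg_mul, Finset.sum_neg_distrib, hsum 0]
      norm_num
      ring
    have hA1 : A'.mulVec z (Fin.natAdd m 1) = -(z (Fin.natAdd N 0)) - φ.linear yz 0 := by
      simp only [Matrix.mulVec, dotProduct, hA', Matrix.of_apply, Fin.addCases_right]
      rw [dot_addCases]
      simp only [neg_mul, Finset.sum_neg_distrib, hsum 0]
      norm_num
      ring
    have hC0 : C'.mulVec z (Fin.natAdd K 0) =
        ((n:ℝ)+1) * φ.linear yz 0 - φ.linear yz 1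
          - ((n:ℝ)+1) * z (Fin.natAdd N 0) + z (Fin.natAdd N 1) := by
      simp only [Matrix.mulVec, dotProduct, hC', Matrix.of_apply, Fin.addCases_right]
      rw [dot_addCases]
      have hsplit : ∀ j₀ : Fin N, (((n:ℝ)+1) * Mat 0 j₀ - Mat 1 j₀) * z (Fin.castAdd 2 j₀)
          = ((n:ℝ)+1) * (Mat 0 j₀ * z (Fin.castAdd 2 j₀)) - Mat 1 j₀ * z (Fin.castAdd 2 j₀) := by
        intro j₀; ring
      rw [Finset.sum_congr rfl (fun j₀ _ => hsplit j₀), Finset.sum_sub_distrib,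
        ← Finset.mul_sum, hsum 0, hsum 1]
      norm_num
      ring
    have hbcast : ∀ i₀ : Fin m, b' (Fin.castAdd 2 i₀) = b i₀ := by
      intro i₀; simp [hb']
    have hecast : ∀ i₀ : Fin K, e' (Fin.castAdd 1 i₀) = e i₀ := by
      intro i₀; simp [he']
    have hb0 : b' (Fin.natAdd m 0) = φ 0 0 := by simp [hb']
    have hb1 : b' (Fin.natAdd m 1) = φ 0 0 - ((n:ℝ)+1) := by simp [hb']
    have he0 : e' (Fin.natAdd K 0) = φ 0 1 - ((n:ℝ)+1) * φ 0 0 := by simp [he']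
    constructor
    · rintro ⟨hle, heq⟩
      have heq' := congrFun heq
      have hnew0 := hle (Fin.natAdd m 0)
      rw [hA0, hb0] at hnew0
      have hnew1 := hle (Fin.natAdd m 1)
      rw [hA1, hb1] at hnew1
      have hnewE := heq' (Fin.natAdd K 0)
      rw [hC0, he0] at hnewE
      refine ⟨⟨?_, ?_⟩, ?_, ?_, ?_⟩
      · intro i₀
        have h := hle (Fin.castAdd 2 i₀)
        rwa [hrowA i₀, hbcast i₀] at h
      · funext i₀
        have h := heq' (Fin.castAdd 1 i₀)
        rwa [hrowC i₀, hecast i₀] at h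
      · linear_combination hnewE - hφ1 + ((n:ℝ)+1) * hφ0
      · linarith
      · linarith
    · rintro ⟨⟨hle, heq⟩, hc1, hc2, hc3⟩
      constructor
      · intro i
        refine Fin.addCases ?_ ?_ i
        · intro i₀
          rw [hrowA i₀, hbcast i₀]
          exact hle i₀
        · intro i₁
          fin_cases i₁
          · show A'.mulVec z (Fin.natAdd m 0) ≤ b' (Fin.natAdd m 0)
            rw [hA0, hb0]; linarith
          · show A'.mulVec z (Fin.natAdd m 1) ≤ b' (Fin.natAdd m 1)
            rw [hA1, hb1]; linarith
      · funext i
        refine Fin.addCases ?_ ?_ i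
        · intro i₀
          rw [hrowC i₀, hecast i₀]
          exact congrFun heq i₀
        · intro i₁
          fin_cases i₁
          show C'.mulVec z (Fin.natAdd K 0) = e' (Fin.natAdd K 0)
          rw [hC0, he0]
          linear_combination hc1 + hφ1 - ((n:ℝ)+1) * hφ0
  refine ⟨N+2, K+1, A', b', C', e', (LinearMap.funLeft ℝ ℝ (Fin.natAdd N)).toAffineMap, ?_⟩
  rw [hhull]
  ext x
  simp only [mem_setOf_eq, mem_image]
  constructor
  · rintro ⟨y, hy, hc1, hc2, hc3⟩
    have hyz : (fun j => Fin.append y x (Fin.castAdd 2 j)) = y := by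
      funext j; simp
    refine ⟨Fin.append y x, (hmem _).2 ?_, ?_⟩
    · rw [hyz]
      refine ⟨hy, ?_, ?_, ?_⟩ <;>
        simp only [Fin.append_right] <;> linarith [hc1, hc2, hc3]
    · funext u
      simp [LinearMap.funLeft_apply, Fin.append_right]
  · rintro ⟨z, hz, rfl⟩
    obtain ⟨hzy, hc1, hc2, hc3⟩ := (hmem z).1 hz
    refine ⟨(fun j => z (Fin.castAdd 2 j)), hzy, ?_, ?_, ?_⟩ <;>
      simp only [LinearMap.coe_toAffineMap, LinearMap.funLeft_apply, Function.comp_apply] <;>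
      linarith [hc1, hc2, hc3]

/-- the simplex extended formulation: `xcSet (cyclic 2 1 k)` is nonempty. -/
lemma xcSet_nonempty (k : ℤ) (hk : 1 ≤ k) : (xcSet (cyclic 2 1 k)).Nonempty := by
  set n : ℕ := k.toNat with hn
  have hkn : (n : ℤ) = k := Int.toNat_of_nonneg (by omega)
  -- vertex matrix
  set M : Matrix (Fin 2) (Fin n) ℝ := Matrix.of (fun u i => pt ((i:ℤ)+1) u) with hM
  refine ⟨n, n, 1, -(1 : Matrix (Fin n) (Fin n) ℝ), 0,
    Matrix.of (fun (_ : Fin 1) (_ : Fin n) => (1:ℝ)), (fun _ => 1),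
    (M.mulVecLin).toAffineMap, ?_⟩
  have hset : { y : Fin n → ℝ | (-(1 : Matrix (Fin n) (Fin n) ℝ)).mulVec y ≤ 0 ∧
      (Matrix.of (fun (_ : Fin 1) (_ : Fin n) => (1:ℝ))).mulVec y = (fun _ => 1) } =
      { y : Fin n → ℝ | (∀ i, 0 ≤ y i) ∧ ∑ i, y i = 1 } := by
    ext y
    simp only [mem_setOf_eq, Matrix.neg_mulVec, Matrix.one_mulVec]
    constructor
    · rintro ⟨h1, h2⟩
      refine ⟨fun i => by simpa using (h1 i), ?_⟩
      have := congrFun h2 0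
      simpa [Matrix.mulVec, dotProduct] using this
    · rintro ⟨h1, h2⟩
      refine ⟨fun i => by simpa using (h1 i), ?_⟩
      funext j
      simpa [Matrix.mulVec, dotProduct] using h2
  rw [hset, cyclic_eq]
  apply le_antisymm
  · -- convexHull (V 1 k) ⊆ image
    apply convexHull_min
    · rintro x ⟨i, h1, h2, rfl⟩
      have hi : (i - 1).toNat < n := by omega
      refine ⟨Pi.single ⟨(i-1).toNat, hi⟩ 1, ⟨?_, ?_⟩, ?_⟩
      · intro j
        simp only [Pi.single_apply]
        split <;> norm_num
      · simp [Pi.single_apply]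
      · have h2' : pt ((((⟨(i-1).toNat, hi⟩ : Fin n) : ℕ) : ℤ) + 1) = pt i := by
          have hval : ((((⟨(i-1).toNat, hi⟩ : Fin n) : ℕ) : ℤ) + 1) = i := by
            simp only [Fin.val_mk]
            omega
          rw [hval]
        calc M.mulVecLin.toAffineMap (Pi.single ⟨(i-1).toNat, hi⟩ 1)
            = fun u => M u ⟨(i-1).toNat, hi⟩ * 1 := by
              rw [LinearMap.coe_toAffineMap, Matrix.mulVecLin_apply, Matrix.mulVec_single]
              funext u; simp [Matrix.col]
          _ = pt i := by
              funext u
              rw [mul_one, hM, Matrix.of_apply, ← h2']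
    · -- image is convex
      apply Convex.affine_image
      intro y₁ hy₁ y₂ hy₂ a b ha hb hab
      refine ⟨fun i => add_nonneg (mul_nonneg ha (hy₁.1 i)) (mul_nonneg hb (hy₂.1 i)), ?_⟩
      simp only [Pi.add_apply, Pi.smul_apply, smul_eq_mul, Finset.sum_add_distrib,
        ← Finset.mul_sum, hy₁.2, hy₂.2]
      linarith
  · -- image ⊆ convexHull
    rintro x ⟨y, ⟨hy0, hy1⟩, rfl⟩
    have hz : ∀ i : Fin n, pt ((i:ℤ)+1) ∈ V 1 k := by
      intro i
      exact ⟨(i:ℤ)+1, by omega, by omega, rfl⟩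
    have := Finset.centerMass_mem_convexHull (Finset.univ : Finset (Fin n))
      (fun i _ => hy0 i) (by rw [hy1]; norm_num) (fun i _ => hz i)
    have hcm : (Finset.univ : Finset (Fin n)).centerMass y (fun i => pt ((i:ℤ)+1)) =
        M.mulVecLin.toAffineMap y := by
      rw [Finset.centerMass_eq_of_sum_1 _ _ hy1]
      funext u
      simp [Matrix.mulVecLin, Matrix.mulVec, dotProduct, hM, mul_comm]
    rwa [hcm] at this

theorem xc_cyclic_two_dim_halving (k : ℕ) (hk : 2 ≤ k) :
    xc (cyclic 2 1 (2 * (k : ℤ))) ≤ xc (cyclic 2 1 (k : ℤ)) + 2 ∧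
    xc (cyclic 2 1 (2 * (k : ℤ) - 1)) ≤ xc (cyclic 2 1 (k : ℤ)) + 2 := by
  have hk1 : (1 : ℤ) ≤ (k : ℤ) := by exact_mod_cast Nat.one_le_of_lt hk
  have hne := xcSet_nonempty (k : ℤ) hk1
  have hmem : xc (cyclic 2 1 (k:ℤ)) ∈ xcSet (cyclic 2 1 (k:ℤ)) := Nat.sInf_mem hne
  constructor
  · have h2 := step (k:ℤ) (2*(k:ℤ)) hk1 (by omega) (by omega) _ hmem
    exact Nat.sInf_le h2
  · have h2 := step (k:ℤ) (2*(k:ℤ)-1) hk1 (by omega) (by omega) _ hmem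
    exact Nat.sInf_le h2
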